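/- A signed graph Γ = (G, σ) is odd-exchangeable (there exists an automorphism φ of G mapping the positive odd 2-regular subgraphs bijectively onto the negative odd 2-regular subgraphs and preserving the set of positive even 2-regular subgraphs) if and only if Γ is sign-symmetric (switching isomorphic to its negation −Γ). -/

import Mathlib

open scoped Classical
open Polynomial



section Aux

variable {V : Type*} {G : SimpleGraph V}

lemma aux_list_prod_pm : ∀ (l : List ℤ), (∀ x ∈ l, x = 1 ∨ x = -1) →
    l.prod = 1 ∨ l.prod = -1 := by
  intro l
  induction l with
  | nil => intro _; left; rfl
  | cons a l ih =>
    intro h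
    rcases h a (by simp) with h1 | h1 <;>
      rcases ih (fun x hx => h x (by simp [hx])) with h2 | h2 <;>
        simp [h1, h2]

lemma aux_finset_prod_pm {α : Type*} (s : Finset α) (f : α → ℤ)
    (h : ∀ x ∈ s, f x = 1 ∨ f x = -1) : s.prod f = 1 ∨ s.prod f = -1 := by
  classical
  induction s using Finset.cons_induction with
  | empty => left; simp
  | cons a s ha ih =>
    rw [Finset.prod_cons]
    rcases h a (by simp) with h1 | h1 <;>
      rcases ih (fun x hx => h x (by simp [hx])) with h2 | h2 <;>
        simp [h1, h2]

lemma aux_prod_edges_eq [Fintype V] (G : SimpleGraph V) [DecidableRel G.Adj] (f : V → ℤ) :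
    ∏ e ∈ G.edgeFinset, Sym2.lift ⟨fun u v => f u * f v, fun u v => mul_comm _ _⟩ e
      = ∏ v, f v ^ G.degree v := by
  classical
  have h1 : ∏ e ∈ G.edgeFinset,
      ∏ d ∈ Finset.univ.filter (fun d : G.Dart => d.edge = e), f d.fst
      = ∏ d : G.Dart, f d.fst :=
    Finset.prod_fiberwise_of_maps_to (fun d _ => by simp [SimpleGraph.Dart.edge_mem]) _
  have h2 : ∏ v : V, ∏ d ∈ Finset.univ.filter (fun d : G.Dart => d.fst = v), f d.fst
      = ∏ d : G.Dart, f d.fst :=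
    Finset.prod_fiberwise_of_maps_to (fun d _ => Finset.mem_univ _) _
  have key : ∀ e ∈ G.edgeFinset,
      ∏ d ∈ Finset.univ.filter (fun d : G.Dart => d.edge = e), f d.fst
        = Sym2.lift ⟨fun u v => f u * f v, fun u v => mul_comm _ _⟩ e := by
    intro e he
    rw [SimpleGraph.mem_edgeFinset] at he
    revert he
    refine Sym2.ind (fun u v he => ?_) e
    have hadj : G.Adj u v := he
    let d : G.Dart := ⟨(u, v), hadj⟩
    have hde : d.edge = s(u, v) := rfl
    have hfib : (Finset.univ.filter (fun d' : G.Dart => d'.edge = s(u, v)))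
        = {d, d.symm} := by
      rw [← hde]
      exact d.edge_fiber
    rw [hfib, Finset.prod_pair d.symm_ne.symm]
    simp [d, SimpleGraph.Dart.symm]
  have key2 : ∀ v : V,
      ∏ d ∈ Finset.univ.filter (fun d : G.Dart => d.fst = v), f d.fst
        = f v ^ G.degree v := by
    intro v
    calc ∏ d ∈ Finset.univ.filter (fun d : G.Dart => d.fst = v), f d.fst
        = ∏ _d ∈ Finset.univ.filter (fun d : G.Dart => d.fst = v), f v :=
          Finset.prod_congr rfl (fun d hd => by
            rw [Finset.mem_filter] at hd
            rw [hd.2])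
      _ = f v ^ (Finset.univ.filter (fun d : G.Dart => d.fst = v)).card :=
          Finset.prod_const _
      _ = f v ^ G.degree v := by rw [G.dart_fst_fiber_card_eq_degree v]
  calc ∏ e ∈ G.edgeFinset, Sym2.lift ⟨fun u v => f u * f v, fun u v => mul_comm _ _⟩ e
      = ∏ e ∈ G.edgeFinset,
        ∏ d ∈ Finset.univ.filter (fun d : G.Dart => d.edge = e), f d.fst :=
        (Finset.prod_congr rfl key).symm
    _ = ∏ d : G.Dart, f d.fst := h1
    _ = ∏ v : V, ∏ d ∈ Finset.univ.filter (fun d : G.Dart => d.fst = v), f d.fst := h2.symm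
    _ = ∏ v, f v ^ G.degree v := Finset.prod_congr rfl (fun v _ => key2 v)

lemma aux_prod_edges_one [Fintype V] (G : SimpleGraph V) [DecidableRel G.Adj]
    (hdeg : ∀ v, Even (G.degree v)) (U : Set V) :
    ∏ e ∈ G.edgeFinset,
      Sym2.lift ⟨fun u v => (if u ∈ U then (-1 : ℤ) else 1) * (if v ∈ U then (-1 : ℤ) else 1),
        fun u v => mul_comm _ _⟩ e = 1 := by
  rw [aux_prod_edges_eq]
  refine Finset.prod_eq_one (fun v _ => ?_)
  by_cases hv : v ∈ U
  · simp [hv, Even.neg_one_pow (hdeg v)]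
  · simp [hv]

end Aux


section Aux2

open SimpleGraph

variable {V : Type*} {G : SimpleGraph V}

lemma aux_path_end_nbr {u v : V} {p : G.Walk u v} (hp : p.IsPath) (hn : ¬ p.Nil) :
    ∃ x, s(x, v) ∈ p.edges ∧ p.toSubgraph.neighborSet v = {x} := by
  induction p with
  | nil => simp at hn
  | @cons u y v h q ih =>
    cases q with
    | nil =>
      refine ⟨u, by simp [Sym2.eq_swap], ?_⟩
      simp only [Walk.toSubgraph]
      rw [Subgraph.neighborSet_sup]
      rw [neighborSet_snd_subgraphOfAdj h, neighborSet_singletonSubgraph]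
      simp
    | @cons y z v h' q' =>
      obtain ⟨x, hx1, hx2⟩ := ih hp.of_cons (by simp)
      refine ⟨x, by rw [Walk.edges_cons]; exact List.mem_cons_of_mem _ hx1, ?_⟩
      rw [Walk.toSubgraph, Subgraph.neighborSet_sup]
      have hsupp := hp.support_nodup
      have hvy : v ≠ y := by
        have hq' : (Walk.cons h' q').IsPath := hp.of_cons
        have := hq'.support_nodup
        rw [Walk.support_cons, List.nodup_cons] at this
        intro hh
        exact this.1 (hh ▸ q'.end_mem_support)
      have hvu : v ≠ u := by
        rw [Walk.support_cons, List.nodup_cons] at hsupp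
        intro hh
        exact hsupp.1 (hh ▸ (Walk.cons h' q').end_mem_support)
      rw [neighborSet_subgraphOfAdj_of_ne_of_ne h hvu hvy, hx2]
      simp

lemma aux_cycle_nbr_base {v : V} {w : G.Walk v v} (hw : w.IsCycle) :
    (w.toSubgraph.neighborSet v).ncard = 2 := by
  cases w with
  | nil => exact absurd rfl hw.ne_nil
  | @cons v y v' h q =>
    have hq : q.IsPath := by
      rw [Walk.isPath_def]
      simpa using hw.support_nodup
    have hlen : 3 ≤ (Walk.cons h q).length := hw.three_le_length
    have hqn : ¬ q.Nil := by
      rw [Walk.not_nil_iff_lt_length]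
      simp only [Walk.length_cons] at hlen
      omega
    obtain ⟨x, hx1, hx2⟩ := aux_path_end_nbr hq hqn
    have htrail : (Walk.cons h q).edges.Nodup := hw.isTrail.edges_nodup
    rw [Walk.edges_cons, List.nodup_cons] at htrail
    have hyx : y ≠ x := by
      intro hh
      subst hh
      exact htrail.1 (by rwa [Sym2.eq_swap])
    simp only [Walk.toSubgraph]
    rw [Subgraph.neighborSet_sup, neighborSet_fst_subgraphOfAdj h, hx2]
    rw [Set.singleton_union]
    exact Set.ncard_pair hyx

lemma aux_cycle_nbr {a : V} {c : G.Walk a a} (hc : c.IsCycle) {v : V}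
    (hv : v ∈ c.support) : (c.toSubgraph.neighborSet v).ncard = 2 := by
  classical
  rw [← c.toSubgraph_rotate hv]
  exact aux_cycle_nbr_base (hc.rotate hv)

lemma aux_cycle_verts_ncard {a : V} {c : G.Walk a a} (hc : c.IsCycle) :
    c.toSubgraph.verts.ncard = c.length := by
  classical
  cases c with
  | nil => exact absurd rfl hc.ne_nil
  | @cons a y a' h q =>
    have hset : (Walk.cons h q).toSubgraph.verts = ↑((Walk.cons h q).support.tail.toFinset) := by
      rw [Walk.verts_toSubgraph]
      ext w
      simp only [Set.mem_setOf_eq, Finset.coe_sort_coe, Finset.mem_coe, List.mem_toFinset]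
      rw [Walk.support_cons]
      simp only [List.tail_cons]
      constructor
      · intro hmem
        rcases List.mem_cons.mp hmem with rfl | hmem
        · exact q.end_mem_support
        · exact hmem
      · intro hmem
        exact List.mem_cons_of_mem _ hmem
    rw [hset, Set.ncard_coe_finset, List.toFinset_card_of_nodup hc.support_nodup]
    have := (Walk.cons h q).length_support
    have ht : (Walk.cons h q).support.tail.length = (Walk.cons h q).support.length - 1 :=
      List.length_tail
    omega

lemma aux_path_edge_start_end {u v : V} {p : G.Walk u v} (hp : p.IsPath)
    (he : s(u, v) ∈ p.edges) : p.edges = [s(u, v)] := by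
  cases p with
  | nil => simp at he
  | @cons u y v h q =>
    rw [Walk.edges_cons] at he ⊢
    rcases List.mem_cons.mp he with heq | hmem
    · -- s(u,v) = s(u,y)
      have : v = y ∨ (u = v ∧ u = y) := by
        rw [Sym2.eq_iff] at heq
        rcases heq with ⟨-, rfl⟩ | ⟨h1, h2⟩
        · exact Or.inl rfl
        · exact Or.inr ⟨h2.symm, h1⟩
      rcases this with rfl | ⟨rfl, rfl⟩
      · -- q : Walk v v is a path, hence nil
        have hq : q.IsPath := hp.of_cons
        have : q = Walk.nil := by
          cases q with
          | nil => rfl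
          | cons h' q' =>
            exfalso
            have := hq.support_nodup
            rw [Walk.support_cons, List.nodup_cons] at this
            exact this.1 (Walk.end_mem_support _)
        subst this
        simp
      · -- u = v = y, but h : G.Adj u y gives u ≠ y
        exact absurd rfl h.ne
    · -- s(u,v) ∈ q.edges, so u ∈ q.support, contradicting path
      exfalso
      have hu : u ∈ q.support := Walk.fst_mem_support_of_mem_edges q hmem
      have := hp.support_nodup
      rw [Walk.support_cons, List.nodup_cons] at this
      exact this.1 hu

end Aux2


section Aux3
open SimpleGraph

variable {V : Type*} {G : SimpleGraph V}

lemma aux_closed_walk_prod {δ : Sym2 V → ℤ}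
    (hpm : ∀ e ∈ G.edgeSet, δ e = 1 ∨ δ e = -1)
    (hcyc : ∀ (a : V) (c : G.Walk a a), c.IsCycle → (c.edges.map δ).prod = 1) :
    ∀ (n : ℕ) (a : V) (w : G.Walk a a), w.length ≤ n → (w.edges.map δ).prod = 1 := by
  classical
  intro n
  induction n with
  | zero =>
    intro a w hw
    have : w = Walk.nil := Walk.nil_iff_eq_nil.mp (Walk.length_eq_zero_iff.mp (Nat.le_zero.mp hw))
    subst this
    simp
  | succ n ih =>
    intro a w hw
    by_cases hlen0 : w.length = 0
    · have : w = Walk.nil := Walk.nil_iff_eq_nil.mp (Walk.length_eq_zero_iff.mp hlen0)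
      subst this; simp
    by_cases hcycle : w.IsCycle
    · exact hcyc _ _ hcycle
    by_cases hnodup : w.support.tail.Nodup
    · cases w with
      | nil => simp
      | @cons a b a' h r =>
        have hr : r.IsPath := by
          rw [Walk.isPath_def]
          simpa using hnodup
        by_cases he : s(a, b) ∈ r.edges
        · have hre : r.edges = [s(b, a)] := aux_path_edge_start_end hr (by rwa [Sym2.eq_swap])
          rw [Walk.edges_cons, hre]
          have hsw : s(b, a) = s(a, b) := Sym2.eq_swap
          rw [hsw]
          rcases hpm s(a, b) (G.mem_edgeSet.mpr h) with h1 | h1 <;> simp [h1]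
        · exact absurd ((Walk.cons_isCycle_iff r h).mpr ⟨hr, he⟩) hcycle
    · -- there is a repeated vertex in the tail of the support
      obtain ⟨x, hx2⟩ : ∃ x, 2 ≤ w.support.tail.count x := by
        by_contra hcon
        push_neg at hcon
        exact hnodup (List.nodup_iff_count_le_one.mpr (fun x => by
          have := hcon x; omega))
      have hxs : x ∈ w.support := by
        apply List.mem_of_mem_tail
        rw [← List.count_pos_iff]
        omega
      have hrot := (w.rotate_edges x hxs).symm
      have hprodeq : ((w.rotate x hxs).edges.map δ).prod = (w.edges.map δ).prod :=
        List.Perm.prod_eq ((w.rotate_edges x hxs).perm.map δ)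
      rw [← hprodeq]
      have hcount' : 2 ≤ (w.rotate x hxs).support.tail.count x := by
        rw [List.Perm.count_eq (w.support_rotate x hxs).perm]
        exact hx2
      have hlenrot : (w.rotate x hxs).length = w.length := by
        have h1 := (w.rotate_edges x hxs).perm.length_eq
        rw [Walk.length_edges, Walk.length_edges] at h1
        exact h1
      -- now analyze the rotated walk
      generalize hw' : w.rotate x hxs = w' at hcount' hlenrot
      cases w' with
      | nil => simp at hcount'
      | @cons x y x' h' r =>
        rw [Walk.support_cons, List.tail_cons] at hcount'
        have hxr : x ∈ r.support := by
          rw [← List.count_pos_iff]; omega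
        have hspec := r.take_spec hxr
        have hc1 : (r.takeUntil x hxr).support.count x = 1 :=
          r.count_support_takeUntil_eq_one hxr
        have hcount2 : 1 ≤ (r.dropUntil x hxr).support.tail.count x := by
          have hsupp : r.support = (r.takeUntil x hxr).support
              ++ (r.dropUntil x hxr).support.tail := by
            rw [← Walk.support_append, hspec]
          rw [hsupp, List.count_append] at hcount'
          omega
        have hdroplen : 1 ≤ (r.dropUntil x hxr).length := by
          by_contra hcon
          push_neg at hcon
          interval_cases hdl : (r.dropUntil x hxr).length
          · have : (r.dropUntil x hxr) = Walk.nil := Walk.nil_iff_eq_nil.mp (Walk.length_eq_zero_iff.mp hdl)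
            rw [this] at hcount2
            simp at hcount2
        have hlensum : (r.takeUntil x hxr).length + (r.dropUntil x hxr).length = r.length := by
          have := congrArg Walk.length hspec
          rwa [Walk.length_append] at this
        have hrlen : r.length ≤ n := by
          simp only [Walk.length_cons] at hlenrot
          omega
        have h1 : ((Walk.cons h' (r.takeUntil x hxr)).edges.map δ).prod = 1 := by
          apply ih
          rw [Walk.length_cons]
          omega
        have h2 : ((r.dropUntil x hxr).edges.map δ).prod = 1 := by
          apply ih
          omega
        have hredges : r.edges = (r.takeUntil x hxr).edges ++ (r.dropUntil x hxr).edges := by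
          rw [← Walk.edges_append, hspec]
        rw [Walk.edges_cons, hredges]
        rw [Walk.edges_cons] at h1
        simp only [List.map_cons, List.map_append, List.prod_cons, List.prod_append] at h1 h2 ⊢
        rw [← mul_assoc, h1, h2, one_mul]

end Aux3


section Aux4
open SimpleGraph

variable {V : Type*} {G : SimpleGraph V}

lemma aux_edgeSet_spanningCoe (B : G.Subgraph) : B.spanningCoe.edgeSet = B.edgeSet := by
  ext e
  refine Sym2.ind (fun u v => ?_) e
  rw [SimpleGraph.mem_edgeSet, Subgraph.mem_edgeSet, Subgraph.spanningCoe_adj]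

lemma aux_edge_toFinset_eq [Fintype V] (B : G.Subgraph) :
    (Set.toFinite B.edgeSet).toFinset = B.spanningCoe.edgeFinset := by
  ext e
  rw [Set.Finite.mem_toFinset, SimpleGraph.mem_edgeFinset, aux_edgeSet_spanningCoe]

lemma aux_degree_spanningCoe [Fintype V] (B : G.Subgraph) (v : V) :
    B.spanningCoe.degree v = (B.neighborSet v).ncard := by
  classical
  have hset : B.spanningCoe.neighborSet v = B.neighborSet v := by
    ext w
    rw [SimpleGraph.mem_neighborSet, Subgraph.mem_neighborSet, Subgraph.spanningCoe_adj]
  rw [← SimpleGraph.card_neighborSet_eq_degree, ← Nat.card_eq_fintype_card,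
    Nat.card_coe_set_eq, hset]

lemma aux_degree_twoRegular [Fintype V] (B : G.Subgraph)
    (h2 : ∀ v ∈ B.verts, (B.neighborSet v).ncard = 2) (v : V) :
    B.spanningCoe.degree v = if v ∈ B.verts then 2 else 0 := by
  rw [aux_degree_spanningCoe]
  by_cases hv : v ∈ B.verts
  · simp [hv, h2 v hv]
  · have hempty : B.neighborSet v = ∅ := by
      ext w
      simp only [Subgraph.mem_neighborSet, Set.mem_empty_iff_false, iff_false]
      intro hadj
      exact hv (B.edge_vert hadj)
    simp [hv, hempty]

lemma aux_card_edge [Fintype V] (B : G.Subgraph)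
    (h2 : ∀ v ∈ B.verts, (B.neighborSet v).ncard = 2) :
    (Set.toFinite B.edgeSet).toFinset.card = B.verts.ncard := by
  classical
  have hsum := B.spanningCoe.sum_degrees_eq_twice_card_edges
  rw [Finset.sum_congr rfl (fun v _ => aux_degree_twoRegular B h2 v)] at hsum
  have hvert : ∑ v : V, (if v ∈ B.verts then (2 : ℕ) else 0) = 2 * B.verts.ncard := by
    rw [← Finset.sum_filter, Finset.sum_const, smul_eq_mul, mul_comm]
    congr 1
    rw [Set.ncard_eq_toFinset_card']
    congr 1
    ext v
    simp
  rw [hvert] at hsum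
  rw [aux_edge_toFinset_eq]
  omega

lemma aux_map_neighborSet (f : G ≃g G) (B : G.Subgraph) (v : V) :
    (B.map f.toHom).neighborSet (f v) = f '' B.neighborSet v := by
  ext w
  simp only [Subgraph.mem_neighborSet, Subgraph.map_adj, Set.mem_image]
  constructor
  · rintro ⟨a, b, hab, ha, rfl⟩
    have hav : a = v := f.injective ha
    subst hav
    exact ⟨b, hab, rfl⟩
  · rintro ⟨b, hb, rfl⟩
    exact ⟨v, b, hb, rfl, rfl⟩

lemma aux_map_edgeSet (f : G ≃g G) (B : G.Subgraph) :
    (B.map f.toHom).edgeSet = Sym2.map f '' B.edgeSet := by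
  ext e
  constructor
  · intro he
    revert he
    refine Sym2.ind (fun x y he => ?_) e
    rw [Subgraph.mem_edgeSet] at he
    obtain ⟨a, b, hab, rfl, rfl⟩ := he
    exact ⟨s(a, b), hab, by simp⟩
  · rintro ⟨e', he', rfl⟩
    revert he'
    refine Sym2.ind (fun a b he' => ?_) e'
    rw [Subgraph.mem_edgeSet] at he'
    rw [Sym2.map_pair_eq, Subgraph.mem_edgeSet]
    exact ⟨a, b, he', rfl, rfl⟩

lemma aux_map_map_symm (f : G ≃g G) (B : G.Subgraph) :
    (B.map f.toHom).map f.symm.toHom = B := by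
  rw [← Subgraph.map_comp, f.symm_toHom_comp_toHom, Subgraph.map_id]

lemma aux_map_injective (f : G ≃g G) :
    Function.Injective (fun B : G.Subgraph => B.map f.toHom) := by
  intro B C h
  have := congrArg (fun D : G.Subgraph => D.map f.symm.toHom) h
  simpa only [aux_map_map_symm] using this

lemma aux_finite_subgraph [Finite V] (G : SimpleGraph V) : Finite G.Subgraph := by
  refine Finite.of_injective (fun B : G.Subgraph => (B.verts, B.Adj)) ?_
  intro B C h
  ext1
  · exact congrArg Prod.fst h
  · exact congrArg Prod.snd h

end Aux4
-- appended
section Aux5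
open SimpleGraph
variable {V : Type*} {G : SimpleGraph V}

lemma aux_map_symm_map (f : G ≃g G) (B : G.Subgraph) :
    (B.map f.symm.toHom).map f.toHom = B := by
  have h := aux_map_map_symm f.symm B
  rwa [show f.symm.symm = f from rfl] at h

end Aux5



structure SignedGraph (V : Type*) where
  G : SimpleGraph V
  sgn : V → V → ℤ
  symm : ∀ u v, sgn u v = sgn v u
  pm : ∀ u v, G.Adj u v → sgn u v = 1 ∨ sgn u v = -1
  zero : ∀ u v, ¬ G.Adj u v → sgn u v = 0

namespace SignedGraph

variable {V : Type*}

/-- The (real) adjacency matrix of a signed graph. -/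
noncomputable def adjMatrix [Fintype V] (Γ : SignedGraph V) : Matrix V V ℝ :=
  fun u v => (Γ.sgn u v : ℝ)

/-- Switching with respect to a vertex subset `U`. -/
noncomputable def switch (Γ : SignedGraph V) (U : Set V) : SignedGraph V where
  G := Γ.G
  sgn u v := if ((u ∈ U) ↔ (v ∈ U)) then Γ.sgn u v else -Γ.sgn u v
  symm u v := by
    try dsimp only
    by_cases h : (u ∈ U) ↔ (v ∈ U)
    · rw [if_pos h, if_pos (Iff.symm h), Γ.symm u v]
    · rw [if_neg h, if_neg (fun hh => h (Iff.symm hh)), Γ.symm u v]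
  pm u v hadj := by
    by_cases h : (u ∈ U) ↔ (v ∈ U)
    · simpa [h] using Γ.pm u v hadj
    · rcases Γ.pm u v hadj with h1 | h1 <;> simp [h, h1]
  zero u v hadj := by
    by_cases h : (u ∈ U) ↔ (v ∈ U) <;> simp [h, Γ.zero u v hadj]

/-- The sign function on unordered pairs. -/
def sgnE (Γ : SignedGraph V) : Sym2 V → ℤ := Sym2.lift ⟨Γ.sgn, Γ.symm⟩

/-- The spectrum of `Γ` is symmetric with respect to the origin. -/
def SymmetricSpectrum [Fintype V] [DecidableEq V] (Γ : SignedGraph V) : Prop :=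
  ∀ x : ℝ, Γ.adjMatrix.charpoly.rootMultiplicity x =
    Γ.adjMatrix.charpoly.rootMultiplicity (-x)

/-- The negation `-Γ = (G, -σ)`. -/
noncomputable def neg (Γ : SignedGraph V) : SignedGraph V where
  G := Γ.G
  sgn u v := -Γ.sgn u v
  symm u v := by (try dsimp only); rw [Γ.symm u v]
  pm u v h := by rcases Γ.pm u v h with h1 | h1 <;> simp [h1]
  zero u v h := by simp [Γ.zero u v h]

/-- `Γ` is sign-symmetric: switching isomorphic to its negation `-Γ`. -/
def SignSymmetric (Γ : SignedGraph V) : Prop :=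
  ∃ (U : Set V) (f : Γ.G ≃g Γ.G), ∀ u v, ((Γ.neg).switch U).sgn (f u) (f v) = Γ.sgn u v

/-- `B` is a (nonempty) 2-regular subgraph of `G`: a disjoint union of cycles. -/
def IsTwoRegular (Γ : SignedGraph V) (B : Γ.G.Subgraph) : Prop :=
  B.verts.Nonempty ∧ ∀ v ∈ B.verts, (B.neighborSet v).ncard = 2

/-- The product of the signs of all edges of a subgraph. -/
noncomputable def sgnProd (Γ : SignedGraph V) (B : Γ.G.Subgraph) : ℤ :=
  ∏ᶠ e ∈ B.edgeSet, Γ.sgnE e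

/-- The number of connected components of a subgraph. -/
noncomputable def ncomp (Γ : SignedGraph V) (B : Γ.G.Subgraph) : ℕ :=
  Nat.card B.coe.ConnectedComponent

/-- `Γ` is odd-exchangeable: some automorphism of `G` maps the positive odd 2-regular
subgraphs onto the negative ones and preserves the positive even 2-regular subgraphs. -/
def OddExchangeable [Fintype V] (Γ : SignedGraph V) : Prop :=
  ∃ φ : Γ.G ≃g Γ.G,
    (fun B : Γ.G.Subgraph => B.map φ.toHom) ''
        {B | Γ.IsTwoRegular B ∧ Odd B.verts.ncard ∧ Γ.sgnProd B = 1} =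
      {B | Γ.IsTwoRegular B ∧ Odd B.verts.ncard ∧ Γ.sgnProd B = -1} ∧
    (fun B : Γ.G.Subgraph => B.map φ.toHom) ''
        {B | Γ.IsTwoRegular B ∧ Even B.verts.ncard ∧ Γ.sgnProd B = 1} =
      {B | Γ.IsTwoRegular B ∧ Even B.verts.ncard ∧ Γ.sgnProd B = 1}

section Proofs

lemma sgnE_mk (Γ : SignedGraph V) (u v : V) : Γ.sgnE s(u, v) = Γ.sgn u v := rfl

lemma sgnE_pm (Γ : SignedGraph V) {e : Sym2 V} (he : e ∈ Γ.G.edgeSet) :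
    Γ.sgnE e = 1 ∨ Γ.sgnE e = -1 := by
  revert he
  refine Sym2.ind (fun u v he => ?_) e
  exact Γ.pm u v he

lemma sgnProd_eq_prod [Fintype V] (Γ : SignedGraph V) (B : Γ.G.Subgraph) :
    Γ.sgnProd B = ∏ e ∈ (Set.toFinite B.edgeSet).toFinset, Γ.sgnE e := by
  rw [sgnProd, show B.edgeSet = ↑(Set.toFinite B.edgeSet).toFinset from
    (Set.Finite.coe_toFinset _).symm, finprod_mem_coe_finset]
  refine Finset.prod_congr ?_ (fun _ _ => rfl)
  ext e
  simp [Set.Finite.mem_toFinset]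

lemma sgnProd_pm [Fintype V] (Γ : SignedGraph V) (B : Γ.G.Subgraph) :
    Γ.sgnProd B = 1 ∨ Γ.sgnProd B = -1 := by
  rw [sgnProd_eq_prod]
  exact aux_finset_prod_pm _ _ (fun e he =>
    Γ.sgnE_pm (B.edgeSet_subset ((Set.Finite.mem_toFinset _).mp he)))

lemma switch_neg_sgn (Γ : SignedGraph V) (U : Set V) (u v : V) :
    ((Γ.neg).switch U).sgn u v =
      ((if u ∈ U then (-1 : ℤ) else 1) * (if v ∈ U then (-1 : ℤ) else 1)) * (-Γ.sgn u v) := by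
  by_cases hu : u ∈ U <;> by_cases hv : v ∈ U <;>
    simp [switch, neg, hu, hv] <;> ring

lemma isTwoRegular_map (Γ : SignedGraph V) (f : Γ.G ≃g Γ.G) {B : Γ.G.Subgraph}
    (hB : Γ.IsTwoRegular B) : Γ.IsTwoRegular (B.map f.toHom) := by
  constructor
  · rw [SimpleGraph.Subgraph.map_verts]
    exact hB.1.image f
  · intro v hv
    rw [SimpleGraph.Subgraph.map_verts] at hv
    obtain ⟨u, hu, rfl⟩ := hv
    rw [show (⇑f.toHom : V → V) u = f u from rfl, aux_map_neighborSet f B u,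
      Set.ncard_image_of_injective _ f.injective]
    exact hB.2 u hu

lemma verts_ncard_map (Γ : SignedGraph V) (f : Γ.G ≃g Γ.G) (B : Γ.G.Subgraph) :
    (B.map f.toHom).verts.ncard = B.verts.ncard := by
  rw [SimpleGraph.Subgraph.map_verts]
  exact Set.ncard_image_of_injective _ f.injective

lemma switch_sgnProd [Fintype V] (Γ : SignedGraph V) (U : Set V) (B : Γ.G.Subgraph)
    (hB : Γ.IsTwoRegular B) :
    ((Γ.neg).switch U).sgnProd B = (-1) ^ B.verts.ncard * Γ.sgnProd B := by
  classical
  rw [sgnProd_eq_prod (Γ.neg.switch U) B, sgnProd_eq_prod]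
  have h1 : ∀ e : Sym2 V, ((Γ.neg).switch U).sgnE e =
      (Sym2.lift ⟨fun u v => (if u ∈ U then (-1 : ℤ) else 1) * (if v ∈ U then (-1 : ℤ) else 1),
        fun u v => mul_comm _ _⟩ e) * (-Γ.sgnE e) := by
    refine Sym2.ind (fun u v => ?_)
    rw [sgnE_mk, sgnE_mk, Sym2.lift_mk]
    exact switch_neg_sgn Γ U u v
  rw [Finset.prod_congr rfl (fun e _ => h1 e), Finset.prod_mul_distrib]
  have h2 : ∏ e ∈ (Set.toFinite B.edgeSet).toFinset,
      Sym2.lift ⟨fun u v => (if u ∈ U then (-1 : ℤ) else 1) * (if v ∈ U then (-1 : ℤ) else 1),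
        fun u v => mul_comm _ _⟩ e = 1 := by
    rw [aux_edge_toFinset_eq]
    exact aux_prod_edges_one B.spanningCoe (fun v => by
      rw [aux_degree_twoRegular B hB.2 v]
      by_cases hv : v ∈ B.verts <;> simp [hv]) U
  erw [h2, one_mul]
  have h3 : ∏ e ∈ (Set.toFinite B.edgeSet).toFinset, (-Γ.sgnE e)
      = (-1) ^ (Set.toFinite B.edgeSet).toFinset.card
        * ∏ e ∈ (Set.toFinite B.edgeSet).toFinset, Γ.sgnE e := by
    rw [Finset.prod_congr rfl (fun e (_ : e ∈ (Set.toFinite B.edgeSet).toFinset) =>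
      show -Γ.sgnE e = (-1) * Γ.sgnE e by ring), Finset.prod_mul_distrib, Finset.prod_const]
  erw [h3, aux_card_edge B hB.2]

lemma switch_map_sgnProd [Fintype V] (Γ : SignedGraph V) (U : Set V) (f : Γ.G ≃g Γ.G)
    (hsw : ∀ u v, ((Γ.neg).switch U).sgn (f u) (f v) = Γ.sgn u v) (B : Γ.G.Subgraph) :
    ((Γ.neg).switch U).sgnProd (B.map f.toHom) = Γ.sgnProd B := by
  rw [sgnProd_eq_prod, sgnProd_eq_prod]
  have hE : (Set.toFinite (B.map f.toHom).edgeSet).toFinset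
      = (Set.toFinite B.edgeSet).toFinset.image (Sym2.map f) := by
    ext e
    rw [Set.Finite.mem_toFinset, aux_map_edgeSet, Finset.mem_image]
    constructor
    · rintro ⟨e', he', rfl⟩
      exact ⟨e', (Set.Finite.mem_toFinset _).mpr he', rfl⟩
    · rintro ⟨e', he', rfl⟩
      exact ⟨e', (Set.Finite.mem_toFinset _).mp he', rfl⟩
  erw [hE, Finset.prod_image (fun a _ b _ h => Sym2.map.injective f.injective h)]
  refine Finset.prod_congr rfl (fun e _ => ?_)
  refine Sym2.ind (fun u v => ?_) e
  rw [Sym2.map_pair_eq, sgnE_mk, sgnE_mk]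
  exact hsw u v

lemma map_sgnProd_of_switch [Fintype V] (Γ : SignedGraph V) (U : Set V) (f : Γ.G ≃g Γ.G)
    (hsw : ∀ u v, ((Γ.neg).switch U).sgn (f u) (f v) = Γ.sgn u v) (B : Γ.G.Subgraph)
    (hB : Γ.IsTwoRegular B) :
    Γ.sgnProd (B.map f.toHom) = (-1) ^ B.verts.ncard * Γ.sgnProd B := by
  have h1 := switch_map_sgnProd Γ U f hsw B
  have h2 := switch_sgnProd Γ U (B.map f.toHom) (isTwoRegular_map Γ f hB)
  rw [verts_ncard_map] at h2
  have h3 : Γ.sgnProd B = (-1) ^ B.verts.ncard * Γ.sgnProd (B.map f.toHom) := by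
    erw [← h1, h2]
  have h4 : ((-1 : ℤ)) ^ B.verts.ncard * (-1 : ℤ) ^ B.verts.ncard = 1 := by
    rw [← pow_add]
    exact Even.neg_one_pow ⟨B.verts.ncard, rfl⟩
  calc Γ.sgnProd (B.map f.toHom)
      = ((-1) ^ B.verts.ncard * (-1) ^ B.verts.ncard) * Γ.sgnProd (B.map f.toHom) := by
        rw [h4, one_mul]
    _ = (-1) ^ B.verts.ncard * Γ.sgnProd B := by rw [mul_assoc, ← h3]

lemma sgnProd_toSubgraph [Fintype V] (Γ : SignedGraph V) {a b : V} (c : Γ.G.Walk a b)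
    (hc : c.edges.Nodup) : Γ.sgnProd c.toSubgraph = (c.edges.map Γ.sgnE).prod := by
  classical
  rw [sgnProd_eq_prod]
  have hset : (Set.toFinite c.toSubgraph.edgeSet).toFinset = c.edges.toFinset := by
    ext e
    rw [Set.Finite.mem_toFinset, SimpleGraph.Walk.mem_edges_toSubgraph, List.mem_toFinset]
  rw [hset, List.prod_toFinset _ hc]

lemma isTwoRegular_toSubgraph (Γ : SignedGraph V) {a : V} {c : Γ.G.Walk a a}
    (hc : c.IsCycle) : Γ.IsTwoRegular c.toSubgraph :=
  ⟨⟨a, c.start_mem_verts_toSubgraph⟩, fun _ hv =>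
    aux_cycle_nbr hc ((SimpleGraph.Walk.mem_verts_toSubgraph c).mp hv)⟩

end Proofs

theorem oddExchangeable_iff_signSymmetric [Fintype V] (Γ : SignedGraph V) :
    Γ.OddExchangeable ↔ Γ.SignSymmetric := by
  classical
  constructor
  · rintro ⟨φ, hodd, heven⟩
    have hfin : Finite Γ.G.Subgraph := aux_finite_subgraph Γ.G
    have hmi : Function.Injective (fun B : Γ.G.Subgraph => B.map φ.toHom) :=
      aux_map_injective φ
    -- the odd and even two-regular families are each preserved setwise
    have hSodd : (fun B : Γ.G.Subgraph => B.map φ.toHom) ''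
        {B | Γ.IsTwoRegular B ∧ Odd B.verts.ncard}
        = {B | Γ.IsTwoRegular B ∧ Odd B.verts.ncard} := by
      apply Set.eq_of_subset_of_ncard_le
      · rintro C ⟨B, ⟨hTR, hoddB⟩, rfl⟩
        exact ⟨isTwoRegular_map Γ φ hTR, by rwa [verts_ncard_map]⟩
      · rw [Set.ncard_image_of_injective _ hmi]
      · exact Set.toFinite _
    have hSeven : (fun B : Γ.G.Subgraph => B.map φ.toHom) ''
        {B | Γ.IsTwoRegular B ∧ Even B.verts.ncard}
        = {B | Γ.IsTwoRegular B ∧ Even B.verts.ncard} := by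
      apply Set.eq_of_subset_of_ncard_le
      · rintro C ⟨B, ⟨hTR, hevB⟩, rfl⟩
        exact ⟨isTwoRegular_map Γ φ hTR, by rwa [verts_ncard_map]⟩
      · rw [Set.ncard_image_of_injective _ hmi]
      · exact Set.toFinite _
    -- negative odd subgraphs are mapped onto positive odd subgraphs
    have hoddneg : (fun B : Γ.G.Subgraph => B.map φ.toHom) ''
        {B | Γ.IsTwoRegular B ∧ Odd B.verts.ncard ∧ Γ.sgnProd B = -1}
        = {B | Γ.IsTwoRegular B ∧ Odd B.verts.ncard ∧ Γ.sgnProd B = 1} := by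
      have hd1 : {B : Γ.G.Subgraph | Γ.IsTwoRegular B ∧ Odd B.verts.ncard ∧ Γ.sgnProd B = -1}
          = {B | Γ.IsTwoRegular B ∧ Odd B.verts.ncard}
            \ {B | Γ.IsTwoRegular B ∧ Odd B.verts.ncard ∧ Γ.sgnProd B = 1} := by
        ext B
        simp only [Set.mem_setOf_eq, Set.mem_diff]
        constructor
        · rintro ⟨h1, h2, h3⟩
          exact ⟨⟨h1, h2⟩, fun hc => by rw [hc.2.2] at h3; norm_num at h3⟩
        · rintro ⟨⟨h1, h2⟩, h3⟩
          refine ⟨h1, h2, ?_⟩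
          rcases Γ.sgnProd_pm B with h | h
          · exact absurd ⟨h1, h2, h⟩ h3
          · exact h
      have hd2 : {B : Γ.G.Subgraph | Γ.IsTwoRegular B ∧ Odd B.verts.ncard}
            \ {B | Γ.IsTwoRegular B ∧ Odd B.verts.ncard ∧ Γ.sgnProd B = -1}
          = {B | Γ.IsTwoRegular B ∧ Odd B.verts.ncard ∧ Γ.sgnProd B = 1} := by
        ext B
        simp only [Set.mem_setOf_eq, Set.mem_diff]
        constructor
        · rintro ⟨⟨h1, h2⟩, h3⟩
          refine ⟨h1, h2, ?_⟩
          rcases Γ.sgnProd_pm B with h | h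
          · exact h
          · exact absurd ⟨h1, h2, h⟩ h3
        · rintro ⟨h1, h2, h3⟩
          exact ⟨⟨h1, h2⟩, fun hc => by rw [hc.2.2] at h3; norm_num at h3⟩
      rw [hd1, Set.image_diff hmi, hSodd, hodd, hd2]
    -- negative even subgraphs are mapped onto negative even subgraphs
    have hevenneg : (fun B : Γ.G.Subgraph => B.map φ.toHom) ''
        {B | Γ.IsTwoRegular B ∧ Even B.verts.ncard ∧ Γ.sgnProd B = -1}
        = {B | Γ.IsTwoRegular B ∧ Even B.verts.ncard ∧ Γ.sgnProd B = -1} := by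
      have hd1 : {B : Γ.G.Subgraph | Γ.IsTwoRegular B ∧ Even B.verts.ncard ∧ Γ.sgnProd B = -1}
          = {B | Γ.IsTwoRegular B ∧ Even B.verts.ncard}
            \ {B | Γ.IsTwoRegular B ∧ Even B.verts.ncard ∧ Γ.sgnProd B = 1} := by
        ext B
        simp only [Set.mem_setOf_eq, Set.mem_diff]
        constructor
        · rintro ⟨h1, h2, h3⟩
          exact ⟨⟨h1, h2⟩, fun hc => by rw [hc.2.2] at h3; norm_num at h3⟩
        · rintro ⟨⟨h1, h2⟩, h3⟩
          refine ⟨h1, h2, ?_⟩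
          rcases Γ.sgnProd_pm B with h | h
          · exact absurd ⟨h1, h2, h⟩ h3
          · exact h
      rw [hd1, Set.image_diff hmi, hSeven, heven, ← hd1]
    -- the key pointwise identity
    have hkey : ∀ B : Γ.G.Subgraph, Γ.IsTwoRegular B →
        Γ.sgnProd (B.map φ.toHom) = (-1) ^ B.verts.ncard * Γ.sgnProd B := by
      intro B hTR
      rcases Nat.even_or_odd B.verts.ncard with hpar | hpar
      · rw [Even.neg_one_pow hpar, one_mul]
        rcases Γ.sgnProd_pm B with hs | hs
        · have hmem : B.map φ.toHom ∈
              {B : Γ.G.Subgraph | Γ.IsTwoRegular B ∧ Even B.verts.ncard ∧ Γ.sgnProd B = 1} := by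
            rw [← heven]
            exact Set.mem_image_of_mem _ ⟨hTR, hpar, hs⟩
          rw [hmem.2.2, hs]
        · have hmem : B.map φ.toHom ∈
              {B : Γ.G.Subgraph | Γ.IsTwoRegular B ∧ Even B.verts.ncard ∧ Γ.sgnProd B = -1} := by
            rw [← hevenneg]
            exact Set.mem_image_of_mem _ ⟨hTR, hpar, hs⟩
          rw [hmem.2.2, hs]
      · rw [Odd.neg_one_pow hpar]
        rcases Γ.sgnProd_pm B with hs | hs
        · have hmem : B.map φ.toHom ∈
              {B : Γ.G.Subgraph | Γ.IsTwoRegular B ∧ Odd B.verts.ncard ∧ Γ.sgnProd B = -1} := by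
            rw [← hodd]
            exact Set.mem_image_of_mem _ ⟨hTR, hpar, hs⟩
          rw [hmem.2.2, hs]
          ring
        · have hmem : B.map φ.toHom ∈
              {B : Γ.G.Subgraph | Γ.IsTwoRegular B ∧ Odd B.verts.ncard ∧ Γ.sgnProd B = 1} := by
            rw [← hoddneg]
            exact Set.mem_image_of_mem _ ⟨hTR, hpar, hs⟩
          rw [hmem.2.2, hs]
          ring
    -- the edge weight δ
    set δ : Sym2 V → ℤ := fun e => -Γ.sgnE (Sym2.map φ e) * Γ.sgnE e with hδdef
    have hδpm : ∀ e ∈ Γ.G.edgeSet, δ e = 1 ∨ δ e = -1 := by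
      intro e he
      have he' : Sym2.map φ e ∈ Γ.G.edgeSet := φ.map_mem_edgeSet_iff.mpr he
      rcases Γ.sgnE_pm he with h1 | h1 <;> rcases Γ.sgnE_pm he' with h2 | h2 <;>
        simp [hδdef, h1, h2]
    -- δ has product one around every cycle
    have hcyc : ∀ (a : V) (c : Γ.G.Walk a a), c.IsCycle → (c.edges.map δ).prod = 1 := by
      intro a c hc
      have hP2 : Γ.sgnProd c.toSubgraph = (c.edges.map Γ.sgnE).prod :=
        Γ.sgnProd_toSubgraph c hc.isTrail.edges_nodup
      have hinj : Function.Injective (⇑φ.toHom : V → V) := φ.injective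
      have hcm : (c.map φ.toHom).IsCycle :=
        (SimpleGraph.Walk.map_isCycle_iff_of_injective hinj).mpr hc
      have hP1 : Γ.sgnProd (c.map φ.toHom).toSubgraph
          = ((c.map φ.toHom).edges.map Γ.sgnE).prod :=
        Γ.sgnProd_toSubgraph _ hcm.isTrail.edges_nodup
      rw [SimpleGraph.Walk.toSubgraph_map] at hP1
      have hkc := hkey c.toSubgraph (isTwoRegular_toSubgraph Γ hc)
      rw [aux_cycle_verts_ncard hc, hP2] at hkc
      have e1 : (c.edges.map δ).prod
          = (c.edges.map (fun e => -Γ.sgnE (Sym2.map φ e))).prod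
            * (c.edges.map Γ.sgnE).prod := by
        rw [hδdef]
        exact List.prod_map_mul
      have e2 : (c.edges.map (fun e => -Γ.sgnE (Sym2.map φ e))).prod
          = (-1) ^ c.length * (c.edges.map (fun e => Γ.sgnE (Sym2.map φ e))).prod := by
        have h' : (c.edges.map (fun e => -Γ.sgnE (Sym2.map φ e)))
            = (c.edges.map (fun e => (-1) * Γ.sgnE (Sym2.map φ e))) := by
          refine List.map_congr_left (fun e _ => by ring)
        rw [h', List.prod_map_mul, List.map_const', List.prod_replicate, c.length_edges]
      have e3 : (c.edges.map (fun e => Γ.sgnE (Sym2.map φ e))).prod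
          = Γ.sgnProd (c.toSubgraph.map φ.toHom) := by
        rw [hP1, SimpleGraph.Walk.edges_map, List.map_map]
        rfl
      rw [e1, e2, e3, hkc]
      have hpm2 : (c.edges.map Γ.sgnE).prod = 1 ∨ (c.edges.map Γ.sgnE).prod = -1 :=
        aux_list_prod_pm _ (fun x hx => by
          obtain ⟨e, he, rfl⟩ := List.mem_map.mp hx
          exact Γ.sgnE_pm (c.edges_subset_edgeSet he))
      have hsq : ((-1 : ℤ) ^ c.length) * ((-1 : ℤ) ^ c.length) = 1 := by
        rw [← pow_add]
        exact Even.neg_one_pow ⟨c.length, rfl⟩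
      rcases hpm2 with h | h <;> rw [h] <;> linear_combination hsq
    -- δ has product one around every closed walk
    have hclosed : ∀ (a : V) (w : Γ.G.Walk a a), (w.edges.map δ).prod = 1 :=
      fun a w => aux_closed_walk_prod hδpm hcyc w.length a w le_rfl
    -- potential function
    have hrep : ∀ v : V, Γ.G.Reachable (Quot.out (Γ.G.connectedComponentMk v)) v :=
      fun v => SimpleGraph.ConnectedComponent.eq.mp (Quot.out_eq _)
    have hrepadj : ∀ u v : V, Γ.G.Adj u v →
        Quot.out (Γ.G.connectedComponentMk v) = Quot.out (Γ.G.connectedComponentMk u) :=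
      fun u v h => congrArg Quot.out
        (SimpleGraph.ConnectedComponent.eq.mpr h.reachable).symm
    set ε : V → ℤ := fun v => (((hrep v).some).edges.map δ).prod with hεdef
    have hεval : ∀ v : V, (((hrep v).some).edges.map δ).prod = ε v := fun _ => rfl
    have hεpm : ∀ v, ε v = 1 ∨ ε v = -1 := fun v =>
      aux_list_prod_pm _ (fun x hx => by
        obtain ⟨e, he, rfl⟩ := List.mem_map.mp hx
        exact hδpm e ((hrep v).some.edges_subset_edgeSet he))
    have hpot : ∀ u v : V, Γ.G.Adj u v → δ s(u, v) = ε u * ε v := by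
      intro u v hadj
      have hco : Quot.out (Γ.G.connectedComponentMk v) = Quot.out (Γ.G.connectedComponentMk u) :=
        hrepadj u v hadj
      have hw := hclosed _ (((hrep u).some).append
        ((SimpleGraph.Walk.cons hadj ((hrep v).some.reverse)).copy rfl hco))
      rw [SimpleGraph.Walk.edges_append, SimpleGraph.Walk.edges_copy,
        SimpleGraph.Walk.edges_cons, SimpleGraph.Walk.edges_reverse, List.map_append,
        List.prod_append, List.map_cons, List.prod_cons, List.map_reverse,
        List.prod_reverse, hεval u, hεval v] at hw
      rcases hεpm u with h1 | h1 <;> rcases hεpm v with h2 | h2 <;>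
        rw [h1, h2] at hw ⊢ <;> linarith
    -- construct the switching set and conclude
    refine ⟨⇑φ '' {v : V | ε v = -1}, φ, fun u v => ?_⟩
    have hmem : ∀ x : V, φ x ∈ ⇑φ '' {v : V | ε v = -1} ↔ ε x = -1 := fun x =>
      ⟨fun ⟨y, hy, hxy⟩ => φ.injective hxy ▸ hy, fun h => ⟨x, h, rfl⟩⟩
    simp only [switch, neg]
    by_cases hadj : Γ.G.Adj u v
    · have hδuv := hpot u v hadj
      have hδval : δ s(u, v) = -Γ.sgn (φ u) (φ v) * Γ.sgn u v := by
        rw [hδdef]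
        simp only [Sym2.map_pair_eq]
        rfl
      rw [hδval] at hδuv
      have hadj' : Γ.G.Adj (φ u) (φ v) := φ.map_adj_iff.mpr hadj
      simp only [hmem u, hmem v]
      rcases Γ.pm u v hadj with h1 | h1 <;> rcases Γ.pm _ _ hadj' with h2 | h2 <;>
        rcases hεpm u with h3 | h3 <;> rcases hεpm v with h4 | h4 <;>
          rw [h1, h2, h3, h4] at hδuv ⊢ <;> revert hδuv <;> norm_num
    · have hadj' : ¬ Γ.G.Adj (φ u) (φ v) := fun hc => hadj (φ.map_adj_iff.mp hc)
      rw [Γ.zero u v hadj, Γ.zero _ _ hadj']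
      simp
  · rintro ⟨U, f, hsw⟩
    refine ⟨f, ?_, ?_⟩
    · ext C
      simp only [Set.mem_image, Set.mem_setOf_eq]
      constructor
      · rintro ⟨B, ⟨hTR, hoddB, hsB⟩, rfl⟩
        refine ⟨isTwoRegular_map Γ f hTR, by rwa [verts_ncard_map], ?_⟩
        rw [map_sgnProd_of_switch Γ U f hsw B hTR, hsB, mul_one, Odd.neg_one_pow hoddB]
      · rintro ⟨hTR, hoddC, hsC⟩
        have hTR' : Γ.IsTwoRegular (C.map f.symm.toHom) := isTwoRegular_map Γ f.symm hTR
        refine ⟨C.map f.symm.toHom, ⟨hTR', by rwa [verts_ncard_map], ?_⟩,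
          aux_map_symm_map f C⟩
        have hmm := map_sgnProd_of_switch Γ U f hsw (C.map f.symm.toHom) hTR'
        rw [aux_map_symm_map f C, verts_ncard_map, hsC,
          Odd.neg_one_pow hoddC] at hmm
        linarith
    · ext C
      simp only [Set.mem_image, Set.mem_setOf_eq]
      constructor
      · rintro ⟨B, ⟨hTR, hevB, hsB⟩, rfl⟩
        refine ⟨isTwoRegular_map Γ f hTR, by rwa [verts_ncard_map], ?_⟩
        rw [map_sgnProd_of_switch Γ U f hsw B hTR, hsB, mul_one, Even.neg_one_pow hevB]
      · rintro ⟨hTR, hevC, hsC⟩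
        have hTR' : Γ.IsTwoRegular (C.map f.symm.toHom) := isTwoRegular_map Γ f.symm hTR
        refine ⟨C.map f.symm.toHom, ⟨hTR', by rwa [verts_ncard_map], ?_⟩,
          aux_map_symm_map f C⟩
        have hmm := map_sgnProd_of_switch Γ U f hsw (C.map f.symm.toHom) hTR'
        rw [aux_map_symm_map f C, verts_ncard_map, hsC,
          Even.neg_one_pow hevC] at hmm
        linarith

end SignedGraph
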